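/- Let 𝓐 be an (n+k)×(n+k) real SPD matrix written in 2×2 block form 𝓐 = [[𝓐ee, 𝓐eb],[𝓐be, 𝓐bb]] with 𝓐ee of size n×n, 𝓐bb of size k×k, and 𝓐be = 𝓐ebᵀ. Then 𝓐ee is SPD, the Schur complement 𝓢 = 𝓐bb − 𝓐be 𝓐ee⁻¹ 𝓐eb is SPD, and if S is a k×k real SPD matrix satisfying α⁻¹ · wᵀ 𝓢 w ≤ wᵀ S w ≤ β · wᵀ 𝓢 w for all w ∈ ℝᵏ (with constants α, β > 0), then the static condensation preconditioner B_sc = [[𝓐ee, 𝓐eb],[𝓐be, 𝓐be 𝓐ee⁻¹ 𝓐eb + S]] is SPD and satisfies min{1, α⁻¹} · xᵀ 𝓐 x ≤ xᵀ B_sc x ≤ max{1, β} · xᵀ 𝓐 x for all x ∈ ℝⁿ⁺ᵏ. -/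

import Mathlib

open Matrix

/-- Spectral equivalence of the static condensation preconditioner. -/
theorem stmt_13 {n k : ℕ}
    (Aee : Matrix (Fin n) (Fin n) ℝ) (Aeb : Matrix (Fin n) (Fin k) ℝ)
    (Abb : Matrix (Fin k) (Fin k) ℝ)
    (hA : (Matrix.fromBlocks Aee Aeb Aebᵀ Abb).PosDef)
    (S : Matrix (Fin k) (Fin k) ℝ) (hS : S.PosDef)
    (α β : ℝ) (hα : 0 < α) (hβ : 0 < β)
    (hlow : ∀ w : Fin k → ℝ,
      α⁻¹ * (w ⬝ᵥ (Abb - Aebᵀ * Aee⁻¹ * Aeb).mulVec w) ≤ w ⬝ᵥ S.mulVec w)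
    (hup : ∀ w : Fin k → ℝ,
      w ⬝ᵥ S.mulVec w ≤ β * (w ⬝ᵥ (Abb - Aebᵀ * Aee⁻¹ * Aeb).mulVec w)) :
    Aee.PosDef ∧
    (Abb - Aebᵀ * Aee⁻¹ * Aeb).PosDef ∧
    (Matrix.fromBlocks Aee Aeb Aebᵀ (Aebᵀ * Aee⁻¹ * Aeb + S)).PosDef ∧
    ∀ x : Fin n ⊕ Fin k → ℝ,
      min 1 α⁻¹ * (x ⬝ᵥ (Matrix.fromBlocks Aee Aeb Aebᵀ Abb).mulVec x) ≤
          x ⬝ᵥ (Matrix.fromBlocks Aee Aeb Aebᵀ (Aebᵀ * Aee⁻¹ * Aeb + S)).mulVec x ∧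
        x ⬝ᵥ (Matrix.fromBlocks Aee Aeb Aebᵀ (Aebᵀ * Aee⁻¹ * Aeb + S)).mulVec x ≤
          max 1 β * (x ⬝ᵥ (Matrix.fromBlocks Aee Aeb Aebᵀ Abb).mulVec x) := by
  have hAherm := hA.1
  rw [Matrix.isHermitian_fromBlocks_iff] at hAherm
  have hsym : Aee.IsHermitian := hAherm.1
  -- Aee is positive definite
  have hAee : Aee.PosDef := by
    refine Matrix.PosDef.of_dotProduct_mulVec_pos hsym fun v hv => ?_
    have hx : (Sum.elim v 0 : Fin n ⊕ Fin k → ℝ) ≠ 0 := by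
      intro h; apply hv; ext i; exact congrFun h (Sum.inl i)
    have := hA.dotProduct_mulVec_pos hx
    simpa [Matrix.fromBlocks_mulVec, star_trivial] using this
  haveI : Invertible Aee :=
    Aee.invertibleOfIsUnitDet (isUnit_iff_ne_zero.mpr hAee.det_pos.ne')
  -- key quadratic form identity
  have key : ∀ (D : Matrix (Fin k) (Fin k) ℝ) (x : Fin n ⊕ Fin k → ℝ),
      x ⬝ᵥ (fromBlocks Aee Aeb Aebᵀ D) *ᵥ x =
        (x ∘ Sum.inl + (Aee⁻¹ * Aeb) *ᵥ (x ∘ Sum.inr)) ⬝ᵥ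
          Aee *ᵥ (x ∘ Sum.inl + (Aee⁻¹ * Aeb) *ᵥ (x ∘ Sum.inr)) +
        (x ∘ Sum.inr) ⬝ᵥ (D - Aebᵀ * Aee⁻¹ * Aeb) *ᵥ (x ∘ Sum.inr) := by
    intro D x
    have h := Matrix.schur_complement_eq₁₁ (A := Aee) Aeb D (x ∘ Sum.inl) (x ∘ Sum.inr) hsym
    simpa only [star_trivial, Matrix.conjTranspose_eq_transpose_of_trivial,
      Sum.elim_comp_inl_inr, ← Matrix.dotProduct_mulVec] using h
  -- Schur complement is positive definite
  have hSc : (Abb - Aebᵀ * Aee⁻¹ * Aeb).PosDef := by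
    have hherm : (Abb - Aebᵀ * Aee⁻¹ * Aeb).IsHermitian := by
      have h1 : (Aebᵀ * Aee⁻¹ * Aeb).IsHermitian := by
        have := Matrix.isHermitian_conjTranspose_mul_mul Aeb hsym.inv
        simpa [Matrix.conjTranspose_eq_transpose_of_trivial] using this
      exact hAherm.2.2.2.sub h1
    refine Matrix.PosDef.of_dotProduct_mulVec_pos hherm fun w hw => ?_
    set x : Fin n ⊕ Fin k → ℝ := Sum.elim (-((Aee⁻¹ * Aeb) *ᵥ w)) w with hxdef
    have hx : x ≠ 0 := by
      intro h; apply hw; ext i; exact congrFun h (Sum.inr i)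
    have h2 := hA.dotProduct_mulVec_pos hx
    have h3 := key Abb x
    have hxl : x ∘ Sum.inl = -((Aee⁻¹ * Aeb) *ᵥ w) := rfl
    have hxr : x ∘ Sum.inr = w := rfl
    rw [hxl, hxr, neg_add_cancel] at h3
    simp only [Matrix.mulVec_zero, dotProduct_zero, zero_add] at h3
    rw [star_trivial] at h2
    rw [h3] at h2
    exact h2
  -- preconditioner is positive definite
  have hBsc : (Matrix.fromBlocks Aee Aeb Aebᵀ (Aebᵀ * Aee⁻¹ * Aeb + S)).PosDef := by
    have hherm : (Matrix.fromBlocks Aee Aeb Aebᵀ (Aebᵀ * Aee⁻¹ * Aeb + S)).IsHermitian := by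
      rw [Matrix.isHermitian_fromBlocks_iff]
      refine ⟨hsym, ?_, ?_, ?_⟩
      · simp [Matrix.conjTranspose_eq_transpose_of_trivial]
      · simp [Matrix.conjTranspose_eq_transpose_of_trivial]
      · have h1 : (Aebᵀ * Aee⁻¹ * Aeb).IsHermitian := by
          have := Matrix.isHermitian_conjTranspose_mul_mul Aeb hsym.inv
          simpa [Matrix.conjTranspose_eq_transpose_of_trivial] using this
        exact h1.add hS.1
    refine Matrix.PosDef.of_dotProduct_mulVec_pos hherm fun x hx => ?_
    rw [star_trivial, key (Aebᵀ * Aee⁻¹ * Aeb + S) x]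
    have hsimp : (Aebᵀ * Aee⁻¹ * Aeb + S) - Aebᵀ * Aee⁻¹ * Aeb = S := add_sub_cancel_left _ _
    rw [hsimp]
    by_cases hw : x ∘ Sum.inr = 0
    · have hu : x ∘ Sum.inl ≠ 0 := by
        intro h; apply hx; ext i
        cases i with
        | inl i => exact congrFun h i
        | inr i => exact congrFun hw i
      rw [hw]
      simp only [Matrix.mulVec_zero, dotProduct_zero, add_zero, add_zero]
      exact hAee.dotProduct_mulVec_pos hu
    · have h1 : 0 ≤ (x ∘ Sum.inl + (Aee⁻¹ * Aeb) *ᵥ (x ∘ Sum.inr)) ⬝ᵥ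
          Aee *ᵥ (x ∘ Sum.inl + (Aee⁻¹ * Aeb) *ᵥ (x ∘ Sum.inr)) := by
        have := hAee.posSemidef.dotProduct_mulVec_nonneg (x ∘ Sum.inl + (Aee⁻¹ * Aeb) *ᵥ (x ∘ Sum.inr))
        simpa only [star_trivial] using this
      have h2 := hS.dotProduct_mulVec_pos hw
      rw [star_trivial] at h2
      linarith
  refine ⟨hAee, hSc, hBsc, fun x => ?_⟩
  set q := (x ∘ Sum.inl + (Aee⁻¹ * Aeb) *ᵥ (x ∘ Sum.inr)) ⬝ᵥ
      Aee *ᵥ (x ∘ Sum.inl + (Aee⁻¹ * Aeb) *ᵥ (x ∘ Sum.inr)) with hq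
  set w := x ∘ Sum.inr with hwdef
  have hqpos : 0 ≤ q := by
    have := hAee.posSemidef.dotProduct_mulVec_nonneg (x ∘ Sum.inl + (Aee⁻¹ * Aeb) *ᵥ (x ∘ Sum.inr))
    simpa only [star_trivial] using this
  have hspos : 0 ≤ w ⬝ᵥ (Abb - Aebᵀ * Aee⁻¹ * Aeb) *ᵥ w := by
    have := hSc.posSemidef.dotProduct_mulVec_nonneg w
    simpa only [star_trivial] using this
  have hAx : x ⬝ᵥ (Matrix.fromBlocks Aee Aeb Aebᵀ Abb) *ᵥ x =
      q + w ⬝ᵥ (Abb - Aebᵀ * Aee⁻¹ * Aeb) *ᵥ w := key Abb x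
  have hBx : x ⬝ᵥ (Matrix.fromBlocks Aee Aeb Aebᵀ (Aebᵀ * Aee⁻¹ * Aeb + S)) *ᵥ x =
      q + w ⬝ᵥ S *ᵥ w := by
    have h := key (Aebᵀ * Aee⁻¹ * Aeb + S) x
    have hsimp : (Aebᵀ * Aee⁻¹ * Aeb + S) - Aebᵀ * Aee⁻¹ * Aeb = S := add_sub_cancel_left _ _
    rw [hsimp] at h
    exact h
  have hl := hlow w
  have hu := hup w
  have hmin1 : min 1 α⁻¹ ≤ 1 := min_le_left _ _
  have hmin2 : min 1 α⁻¹ ≤ α⁻¹ := min_le_right _ _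
  have hmax1 : (1:ℝ) ≤ max 1 β := le_max_left _ _
  have hmax2 : β ≤ max 1 β := le_max_right _ _
  constructor
  · rw [hAx, hBx]
    nlinarith [mul_le_of_le_one_left hqpos hmin1,
      mul_le_mul_of_nonneg_right hmin2 hspos]
  · rw [hAx, hBx]
    nlinarith [le_mul_of_one_le_left hqpos hmax1,
      mul_le_mul_of_nonneg_right hmax2 hspos]
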